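/- arXiv:0808.2669 — 2 statements merged into one kernel-verified Lean document; each statement's English description precedes it below -/
import Mathlib

section
/- Let Φ be a linear map on N × N complex matrices that is trace-preserving and positive (maps positive semidefinite matrices to positive semidefinite matrices). Then Φ has a fixed point that is a density matrix: there exists a positive semidefinite ρ with trace 1 such that Φ(ρ) = ρ. -/
open scoped ComplexOrder
open Matrix Filter Topology

-- smul by nonneg real preserves PSD
lemma psd_smul {n : ℕ} {A : Matrix (Fin n) (Fin n) ℂ} (hA : A.PosSemidef)
    {c : ℝ} (hc : 0 ≤ c) : ((c : ℂ) • A).PosSemidef := by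
  refine Matrix.PosSemidef.of_dotProduct_mulVec_nonneg ?_ ?_
  · unfold Matrix.IsHermitian
    rw [conjTranspose_smul, hA.1.eq]
    simp [Complex.conj_ofReal]
  · intro x
    rw [smul_mulVec, dotProduct_smul]
    exact mul_nonneg (by exact_mod_cast Complex.zero_le_real.2 hc) (hA.dotProduct_mulVec_nonneg x)

-- diagonal entries nonneg
lemma psd_diag {n : ℕ} {A : Matrix (Fin n) (Fin n) ℂ} (hA : A.PosSemidef) (i : Fin n) :
    0 ≤ A i i := by
  have := hA.dotProduct_mulVec_nonneg (Pi.single i 1)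
  have h1 : star (Pi.single i (1:ℂ)) = (Pi.single i 1 : Fin n → ℂ) := by
    funext k; by_cases h : k = i <;> simp [h, Pi.single_apply]
  rw [h1, single_dotProduct] at this
  simpa using this

lemma diag_re_le {n : ℕ} {A : Matrix (Fin n) (Fin n) ℂ} (hA : A.PosSemidef)
    (ht : A.trace = 1) (i : Fin n) : 0 ≤ (A i i).re ∧ (A i i).re ≤ 1 ∧ (A i i).im = 0 := by
  have h0 : ∀ k, 0 ≤ (A k k).re ∧ (A k k).im = 0 := by
    intro k
    have := psd_diag hA k
    rw [Complex.le_def] at this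
    exact ⟨this.1, this.2.symm⟩
  have htr : ∑ k, (A k k).re = 1 := by
    have : (A.trace).re = 1 := by rw [ht]; simp
    rw [Matrix.trace] at this
    simpa [Complex.re_sum, Matrix.diag] using this
  refine ⟨(h0 i).1, ?_, (h0 i).2⟩
  calc (A i i).re ≤ ∑ k, (A k k).re :=
        Finset.single_le_sum (fun k _ => (h0 k).1) (Finset.mem_univ i)
    _ = 1 := htr

lemma entry_bound {n : ℕ} {A : Matrix (Fin n) (Fin n) ℂ} (hA : A.PosSemidef)
    (ht : A.trace = 1) (i j : Fin n) : ‖A i j‖ ≤ 1 := by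
  by_cases hij : i = j
  · subst hij
    obtain ⟨h0, h1, h2⟩ := diag_re_le hA ht i
    have : A i i = ((A i i).re : ℂ) := Complex.ext rfl (by simp [h2])
    rw [this, Complex.norm_real, Real.norm_eq_abs, abs_of_nonneg h0]
    exact h1
  set a := A i j with ha
  by_cases h0 : a = 0
  · simp [← ha, h0]
  set r : ℝ := ‖a‖ with hr
  have hrpos : 0 < r := norm_pos_iff.2 h0
  set c : ℂ := -(starRingEnd ℂ a) / r with hc
  have hnormsq : a * (starRingEnd ℂ a) = (r : ℂ) ^ 2 := by
    rw [Complex.mul_conj]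
    push_cast [hr, Complex.normSq_eq_norm_sq]
    norm_num
  have hconj_c : starRingEnd ℂ c = -a / r := by
    rw [hc]
    simp [map_div₀, Complex.conj_ofReal]
  have hac : a * c = -(r:ℂ) := by
    rw [hc]
    field_simp
    linear_combination -hnormsq
  have hca : (starRingEnd ℂ c) * (starRingEnd ℂ a) = -(r:ℂ) := by
    rw [hconj_c]
    field_simp
    linear_combination -hnormsq
  have hcc : (starRingEnd ℂ c) * c = 1 := by
    rw [hconj_c, hc]
    field_simp
    linear_combination hnormsq
  -- quadratic form
  set x : Fin n → ℂ := Pi.single i 1 + Pi.single j c with hx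
  have hsx : star x = (Pi.single i 1 : Fin n → ℂ) + Pi.single j (starRingEnd ℂ c) := by
    funext k
    by_cases h1 : k = i <;> by_cases h2 : k = j <;>
      simp_all [hx, Pi.single_apply]
  have hQ := hA.dotProduct_mulVec_nonneg x
  have hAji : A j i = starRingEnd ℂ a := by
    rw [ha, ← hA.1.apply j i]
    rfl
  have hQval : star x ⬝ᵥ A *ᵥ x = A i i + A j j - 2 * r := by
    rw [hsx, hx]
    simp only [mulVec_add, dotProduct_add, add_dotProduct, single_dotProduct,
      mulVec_single, Pi.add_apply, mulVec_single]
    simp only [Pi.smul_apply, col_apply, MulOpposite.smul_eq_mul_unop, MulOpposite.unop_op]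
    rw [hAji]
    linear_combination hac + hca + A j j * hcc
  -- real part inequality
  rw [hQval] at hQ
  rw [Complex.le_def] at hQ
  obtain ⟨hi0, hi1, _⟩ := diag_re_le hA ht i
  obtain ⟨hj0, hj1, _⟩ := diag_re_le hA ht j
  have hre : 0 ≤ (A i i).re + (A j j).re - 2 * r := by
    have := hQ.1
    simpa using this
  linarith

attribute [local instance] Matrix.normedAddCommGroup Matrix.normedSpace

section Main

variable {N : ℕ}

/-- entry extraction as a linear map -/
def entryLM (i j : Fin N) : Matrix (Fin N) (Fin N) ℂ →ₗ[ℂ] ℂ where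
  toFun A := A i j
  map_add' _ _ := rfl
  map_smul' _ _ := rfl

/-- quadratic form as a linear map in A -/
noncomputable def quadLM (x : Fin N → ℂ) : Matrix (Fin N) (Fin N) ℂ →ₗ[ℂ] ℂ where
  toFun A := star x ⬝ᵥ A *ᵥ x
  map_add' A B := by simp [add_mulVec, dotProduct_add]
  map_smul' c A := by simp [smul_mulVec, dotProduct_smul]

lemma isClosed_nonneg' : IsClosed {z : ℂ | 0 ≤ z} := by
  have : {z : ℂ | 0 ≤ z} = {z : ℂ | 0 ≤ z.re} ∩ {z : ℂ | z.im = 0} := by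
    ext z
    simp [Complex.le_def, eq_comm]
  rw [this]
  exact (isClosed_le continuous_const Complex.continuous_re).inter
    (isClosed_eq Complex.continuous_im continuous_const)

lemma S_compact :
    IsCompact {A : Matrix (Fin N) (Fin N) ℂ | A.PosSemidef ∧ A.trace = 1} := by
  haveI : ProperSpace (Matrix (Fin N) (Fin N) ℂ) := FiniteDimensional.proper ℂ _
  refine Metric.isCompact_iff_isClosed_bounded.2 ?_
  constructor
  · have hrepr : {A : Matrix (Fin N) (Fin N) ℂ | A.PosSemidef ∧ A.trace = 1} =
        (⋂ i, ⋂ j, {A : Matrix (Fin N) (Fin N) ℂ | star (A j i) = A i j}) ∩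
        ((⋂ x : Fin N → ℂ, {A | 0 ≤ star x ⬝ᵥ A *ᵥ x}) ∩
          {A : Matrix (Fin N) (Fin N) ℂ | A.trace = 1}) := by
      ext A
      simp only [Set.mem_setOf_eq, Set.mem_inter_iff, Set.mem_iInter]
      constructor
      · rintro ⟨h2, h3⟩
        exact ⟨fun i j => h2.1.apply i j, h2.dotProduct_mulVec_nonneg, h3⟩
      · rintro ⟨h1, h2, h3⟩
        exact ⟨Matrix.PosSemidef.of_dotProduct_mulVec_nonneg (Matrix.IsHermitian.ext fun i j => h1 i j) h2, h3⟩
    rw [hrepr]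
    refine IsClosed.inter ?_ (IsClosed.inter ?_ ?_)
    · refine isClosed_iInter fun i => isClosed_iInter fun j => ?_
      exact isClosed_eq (Complex.continuous_conj.comp
        (entryLM j i).continuous_of_finiteDimensional)
        (entryLM i j).continuous_of_finiteDimensional
    · refine isClosed_iInter fun x => ?_
      exact IsClosed.preimage (quadLM x).continuous_of_finiteDimensional isClosed_nonneg'
    · exact isClosed_eq (Matrix.traceLinearMap (Fin N) ℂ ℂ).continuous_of_finiteDimensional
        continuous_const
  · rw [Metric.isBounded_iff_subset_closedBall 0]
    refine ⟨1, fun A hA => ?_⟩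
    rw [Metric.mem_closedBall, dist_zero_right]
    rw [Matrix.norm_le_iff zero_le_one]
    exact fun i j => entry_bound hA.1 hA.2 i j

end Main

theorem stmt_8 {N : ℕ} [NeZero N]
    (Φ : Matrix (Fin N) (Fin N) ℂ →ₗ[ℂ] Matrix (Fin N) (Fin N) ℂ)
    (htr : ∀ A, (Φ A).trace = A.trace)
    (hpos : ∀ A : Matrix (Fin N) (Fin N) ℂ, A.PosSemidef → (Φ A).PosSemidef) :
    ∃ ρ : Matrix (Fin N) (Fin N) ℂ, ρ.PosSemidef ∧ ρ.trace = 1 ∧ Φ ρ = ρ := by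
  have hN : (N : ℂ) ≠ 0 := Nat.cast_ne_zero.2 (NeZero.ne N)
  set S : Set (Matrix (Fin N) (Fin N) ℂ) :=
    {A : Matrix (Fin N) (Fin N) ℂ | A.PosSemidef ∧ A.trace = 1} with hSdef
  set σ : Matrix (Fin N) (Fin N) ℂ := (N : ℂ)⁻¹ • 1 with hσdef
  have hσ : σ ∈ S := by
    constructor
    · have : ((N : ℂ))⁻¹ = (((N : ℝ)⁻¹ : ℝ) : ℂ) := by push_cast; ring
      rw [hσdef, this]
      exact psd_smul Matrix.PosSemidef.one (by positivity)
    · rw [hσdef]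
      simp only [Matrix.trace_smul, Matrix.trace_one]
      simp [Fintype.card_fin, smul_eq_mul, inv_mul_cancel₀ hN]
  set g : ℕ → Matrix (Fin N) (Fin N) ℂ := fun k => (⇑Φ)^[k] σ with hgdef
  have hg_succ : ∀ k, g (k + 1) = Φ (g k) := fun k =>
    Function.iterate_succ_apply' (⇑Φ) k σ
  have hg : ∀ k, g k ∈ S := by
    intro k
    induction k with
    | zero => exact hσ
    | succ k ih =>
      rw [hg_succ]
      exact ⟨hpos _ ih.1, (htr _).trans ih.2⟩
  set avg : ℕ → Matrix (Fin N) (Fin N) ℂ :=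
    fun n => (((n : ℕ) + 1 : ℂ))⁻¹ • ∑ k ∈ Finset.range (n + 1), g k with havgdef
  have hn1 : ∀ n : ℕ, ((n : ℂ) + 1) ≠ 0 := fun n => by
    have : ((n + 1 : ℕ) : ℂ) ≠ 0 := Nat.cast_ne_zero.2 (Nat.succ_ne_zero n)
    push_cast at this
    exact this
  have havg : ∀ n, avg n ∈ S := by
    intro n
    constructor
    · have hsum : (∑ k ∈ Finset.range (n + 1), g k).PosSemidef := by
        refine Finset.sum_induction g Matrix.PosSemidef
          (fun a b ha hb => ha.add hb) Matrix.PosSemidef.zero ?_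
        exact fun k _ => (hg k).1
      have : (((n : ℕ) + 1 : ℂ))⁻¹ = ((((n : ℝ) + 1)⁻¹ : ℝ) : ℂ) := by push_cast; ring
      rw [havgdef]
      simp only
      rw [this]
      exact psd_smul hsum (by positivity)
    · rw [havgdef]
      simp only [Matrix.trace_smul, Matrix.trace_sum, smul_eq_mul]
      have : ∑ k ∈ Finset.range (n + 1), (g k).trace = ((n : ℂ) + 1) := by
        rw [Finset.sum_congr rfl fun k _ => (hg k).2]
        simp
      rw [this, inv_mul_cancel₀ (hn1 n)]
  have hdiff : ∀ n, Φ (avg n) - avg n = (((n : ℂ) + 1))⁻¹ • (g (n + 1) - g 0) := by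
    intro n
    have hΦsum : Φ (∑ k ∈ Finset.range (n + 1), g k)
        = ∑ k ∈ Finset.range (n + 1), g (k + 1) := by
      rw [map_sum]
      exact Finset.sum_congr rfl fun k _ => (hg_succ k).symm
    rw [havgdef]
    simp only
    rw [_root_.map_smul, hΦsum, ← smul_sub, ← Finset.sum_sub_distrib,
      Finset.sum_range_sub g (n + 1)]
  have hboundS : ∀ A ∈ S, ‖A‖ ≤ 1 := by
    intro A hA
    rw [Matrix.norm_le_iff zero_le_one]
    exact fun i j => entry_bound hA.1 hA.2 i j
  have hten : Filter.Tendsto (fun n => Φ (avg n) - avg n) Filter.atTop (nhds 0) := by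
    apply squeeze_zero_norm (a := fun n : ℕ => 2 * ((n : ℝ) + 1)⁻¹)
    · intro n
      rw [hdiff n, norm_smul]
      have h1 : ‖(((n : ℂ) + 1))⁻¹‖ = ((n : ℝ) + 1)⁻¹ := by
        rw [norm_inv]
        congr 1
        rw [show ((n : ℂ) + 1) = (((n : ℝ) + 1 : ℝ) : ℂ) by push_cast; ring,
          Complex.norm_real, Real.norm_eq_abs, abs_of_pos (by positivity)]
      rw [h1]
      have h2 : ‖g (n + 1) - g 0‖ ≤ 2 := by
        calc ‖g (n + 1) - g 0‖ ≤ ‖g (n + 1)‖ + ‖g 0‖ := norm_sub_le _ _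
          _ ≤ 1 + 1 := add_le_add (hboundS _ (hg (n + 1))) (hboundS _ (hg 0))
          _ = 2 := by ring
      calc ((n : ℝ) + 1)⁻¹ * ‖g (n + 1) - g 0‖ ≤ ((n : ℝ) + 1)⁻¹ * 2 := by
            exact mul_le_mul_of_nonneg_left h2 (by positivity)
        _ = 2 * ((n : ℝ) + 1)⁻¹ := by ring
    · have := tendsto_one_div_add_atTop_nhds_zero_nat (𝕜 := ℝ)
      have h2 : Filter.Tendsto (fun n : ℕ => 2 * (1 / ((n : ℝ) + 1)))
          Filter.atTop (nhds (2 * 0)) := this.const_mul 2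
      simpa [one_div] using h2
  haveI : FirstCountableTopology (Matrix (Fin N) (Fin N) ℂ) :=
    inferInstanceAs (FirstCountableTopology (Fin N → Fin N → ℂ))
  obtain ⟨ρ, hρS, φ, hφmono, hφ⟩ := S_compact.tendsto_subseq havg
  have h1 : Filter.Tendsto (fun n => Φ (avg (φ n))) Filter.atTop (nhds (Φ ρ)) :=
    (Φ.continuous_of_finiteDimensional.tendsto ρ).comp hφ
  have h2 : Filter.Tendsto (fun n => Φ (avg (φ n))) Filter.atTop (nhds ρ) := by
    have : (fun n => Φ (avg (φ n)))
        = fun n => (Φ (avg (φ n)) - avg (φ n)) + avg (φ n) := by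
      funext n; abel
    rw [this]
    have := (hten.comp hφmono.tendsto_atTop).add hφ
    simpa using this
  exact ⟨ρ, hρS.1, hρS.2, tendsto_nhds_unique h1 h2⟩
end

section
/- Let f : B → B be a function on a finite set B, let C ⊆ B be the set of cyclic elements of f, and let p : B → [0,1] be a probability distribution that is an ε-fixed-point of f in total variation distance: (1/2)·Σ_x |p(x) − (f⋆p)(x)| ≤ ε. Then there exists a probability distribution q supported on C with total variation distance between p and q at most 2·|B|·ε. -/
theorem stmt_16 {B : Type*} [Fintype B] [DecidableEq B] (f : B → B)
    (C : Finset B) (hC : ∀ x, x ∈ C ↔ ∃ k : ℕ, 1 ≤ k ∧ f^[k] x = x)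
    (p : B → ℝ) (hnn : ∀ x, 0 ≤ p x) (hsum : ∑ x, p x = 1) (ε : ℝ)
    (hfix : (1 / 2) * ∑ x, |p x - ∑ y ∈ Finset.univ.filter (fun y => f y = x), p y| ≤ ε) :
    ∃ q : B → ℝ, (∀ x, 0 ≤ q x) ∧ (∑ x, q x = 1) ∧ (∀ x, q x ≠ 0 → x ∈ C) ∧
      (1 / 2) * ∑ x, |p x - q x| ≤ 2 * (Fintype.card B) * ε := by
  classical
  have habs : (0:ℝ) ≤ ∑ x, |p x - ∑ y ∈ Finset.univ.filter (fun y => f y = x), p y| :=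
    Finset.sum_nonneg fun x _ => abs_nonneg _
  have hε : 0 ≤ ε := le_trans (by linarith) hfix
  have h2ε : ∑ x, |p x - ∑ y ∈ Finset.univ.filter (fun y => f y = x), p y| ≤ 2 * ε := by
    linarith
  have hBne : Nonempty B := by
    rcases isEmpty_or_nonempty B with h | h
    · simp at hsum
    · exact h
  set N := Fintype.card B with hN
  have hNpos : 0 < N := Fintype.card_pos
  -- f maps C into C
  have hfC : ∀ x, x ∈ C → f x ∈ C := by
    intro x hx
    rw [hC] at hx ⊢
    obtain ⟨k, hk1, hk⟩ := hx
    refine ⟨k, hk1, ?_⟩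
    rw [← Function.iterate_succ_apply, Function.iterate_succ_apply', hk]
  -- every element reaches C within fewer than N steps
  have hreach : ∀ x : B, ∃ j < N, f^[j] x ∈ C := by
    intro x
    have key : ∀ i j : ℕ, i < j → f^[i] x = f^[j] x → f^[i] x ∈ C := by
      intro i j hlt heq
      rw [hC]
      refine ⟨j - i, by omega, ?_⟩
      rw [← Function.iterate_add_apply, Nat.sub_add_cancel hlt.le, heq]
    have hnin : ¬ Function.Injective (fun i : Fin (N + 1) => f^[(i : ℕ)] x) := by
      intro hinj
      have := Fintype.card_le_of_injective _ hinj
      simp [hN] at this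
    rw [Function.not_injective_iff] at hnin
    obtain ⟨i, j, hij, hne⟩ := hnin
    rcases lt_or_gt_of_ne (fun h : (i : ℕ) = (j : ℕ) => hne (Fin.ext h)) with h | h
    · exact ⟨i, by omega, key _ _ h hij⟩
    · exact ⟨j, by omega, key _ _ h hij.symm⟩
  -- level sets
  set S : ℕ → Finset B := fun k => Finset.univ.filter (fun x => ∀ j < k, f^[j] x ∉ C)
    with hS
  have hmemS : ∀ k x, x ∈ S k ↔ ∀ j < k, f^[j] x ∉ C := by
    intro k x
    simp [hS]
  have hS1 : ∀ x, x ∈ S 1 ↔ x ∉ C := by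
    intro x
    rw [hmemS]
    constructor
    · intro h
      simpa using h 0 (by omega)
    · intro h j hj
      interval_cases j
      simpa using h
  have hSN : S N = ∅ := by
    ext x
    rw [hmemS]
    simp only [Finset.notMem_empty, iff_false]
    intro h
    obtain ⟨j, hj, hjC⟩ := hreach x
    exact h j hj hjC
  -- preimage identity
  have hpre : ∀ k, 1 ≤ k → Finset.univ.filter (fun x => f x ∈ S k) = S (k + 1) := by
    intro k hk
    ext x
    simp only [Finset.mem_filter, Finset.mem_univ, true_and]
    rw [hmemS, hmemS]
    constructor
    · intro h j hj
      match j with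
      | 0 =>
        intro hxC
        exact h 0 hk (by simpa using hfC x hxC)
      | j + 1 =>
        rw [Function.iterate_succ_apply]
        exact h j (by omega)
    · intro h j hj
      rw [← Function.iterate_succ_apply]
      exact h (j + 1) (by omega)
  -- one-step mass loss bound
  have hstep : ∀ k, 1 ≤ k → (∑ x ∈ S k, p x) - 2 * ε ≤ ∑ x ∈ S (k + 1), p x := by
    intro k hk
    have hfib : ∑ x ∈ S (k + 1), p x
        = ∑ y ∈ S k, ∑ x ∈ Finset.univ.filter (fun x => f x = y), p x := by
      rw [Finset.sum_fiberwise_eq_sum_filter Finset.univ (S k) f p, hpre k hk]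
    have hdiff : (∑ x ∈ S k, p x) - (∑ x ∈ S (k + 1), p x)
        = ∑ y ∈ S k, (p y - ∑ x ∈ Finset.univ.filter (fun x => f x = y), p x) := by
      rw [hfib, Finset.sum_sub_distrib]
    have hle : (∑ x ∈ S k, p x) - (∑ x ∈ S (k + 1), p x) ≤ 2 * ε := by
      rw [hdiff]
      calc ∑ y ∈ S k, (p y - ∑ x ∈ Finset.univ.filter (fun x => f x = y), p x)
          ≤ ∑ y ∈ S k, |p y - ∑ x ∈ Finset.univ.filter (fun x => f x = y), p x| :=
            Finset.sum_le_sum fun y _ => le_abs_self _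
        _ ≤ ∑ y, |p y - ∑ x ∈ Finset.univ.filter (fun x => f x = y), p x| :=
            Finset.sum_le_sum_of_subset_of_nonneg (Finset.subset_univ _)
              (fun y _ _ => abs_nonneg _)
        _ ≤ 2 * ε := h2ε
    linarith
  -- telescoping
  have hind : ∀ m : ℕ, (∑ x ∈ S 1, p x) ≤ (∑ x ∈ S (1 + m), p x) + m * (2 * ε) := by
    intro m
    induction m with
    | zero => simp
    | succ m ih =>
      have := hstep (1 + m) (by omega)
      have h1 : (1 + m) + 1 = 1 + (m + 1) := by omega
      rw [h1] at this
      push_cast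
      calc (∑ x ∈ S 1, p x) ≤ (∑ x ∈ S (1 + m), p x) + m * (2 * ε) := ih
        _ ≤ (∑ x ∈ S (1 + (m + 1)), p x) + 2 * ε + m * (2 * ε) := by linarith
        _ = (∑ x ∈ S (1 + (m + 1)), p x) + (m + 1) * (2 * ε) := by ring
  set M := ∑ x ∈ S 1, p x with hM
  have hMnn : 0 ≤ M := Finset.sum_nonneg fun x _ => hnn x
  have hMle : M ≤ 2 * (N : ℝ) * ε := by
    have := hind (N - 1)
    have h1 : 1 + (N - 1) = N := by omega
    rw [h1, hSN] at this
    simp only [Finset.sum_empty, zero_add] at this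
    have hNc : ((N - 1 : ℕ) : ℝ) ≤ (N : ℝ) := by
      exact_mod_cast Nat.sub_le N 1
    nlinarith
  -- C is nonempty
  obtain ⟨x₀⟩ := hBne
  obtain ⟨j₀, _, hc₀⟩ := hreach x₀
  set c₀ := f^[j₀] x₀ with hc₀def
  -- define q
  refine ⟨fun x => (if x ∈ C then p x else 0) + (if x = c₀ then M else 0), ?_, ?_, ?_, ?_⟩
  · intro x
    have h1 : (0:ℝ) ≤ if x ∈ C then p x else 0 := by by_cases h : x ∈ C <;> simp [h, hnn x]
    have h2 : (0:ℝ) ≤ if x = c₀ then M else 0 := by by_cases h : x = c₀ <;> simp [h, hMnn]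
    show (0:ℝ) ≤ (if x ∈ C then p x else 0) + (if x = c₀ then M else 0)
    linarith
  · rw [Finset.sum_add_distrib]
    have e1 : ∑ x, (if x ∈ C then p x else 0) = ∑ x ∈ Finset.univ.filter (· ∈ C), p x :=
      (Finset.sum_filter _ _).symm
    have e2 : ∑ x, (if x = c₀ then M else 0) = M := by
      rw [Finset.sum_ite_eq' Finset.univ c₀ (fun _ => M)]
      simp
    have e3 : M = ∑ x ∈ Finset.univ.filter (fun x => ¬ x ∈ C), p x := by
      rw [hM]
      apply Finset.sum_congr _ (fun _ _ => rfl)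
      ext x
      simp [hS1 x, Finset.mem_filter]
    rw [e1, e2, e3, Finset.sum_filter_add_sum_filter_not Finset.univ (· ∈ C) p, hsum]
  · intro x hx
    by_contra hxC
    apply hx
    have hne : x ≠ c₀ := fun h => hxC (h ▸ hc₀)
    simp [hxC, hne]
  · have hptw : ∀ x ∈ Finset.univ,
        |p x - ((if x ∈ C then p x else 0) + (if x = c₀ then M else 0))|
        = (if x = c₀ then M else 0) + (if x ∈ C then 0 else p x) := by
      intro x _
      by_cases hx : x = c₀
      · subst hx
        simp only [if_pos hc₀, if_pos rfl, if_true]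
        rw [show p c₀ - (p c₀ + M) = -M from by ring, abs_neg, abs_of_nonneg hMnn]
        ring
      · by_cases hxC : x ∈ C
        · simp [hx, hxC]
        · simp [hx, hxC, abs_of_nonneg (hnn x)]
    rw [Finset.sum_congr rfl hptw, Finset.sum_add_distrib]
    have e2 : ∑ x, (if x = c₀ then M else 0) = M := by
      rw [Finset.sum_ite_eq' Finset.univ c₀ (fun _ => M)]
      simp
    have e3 : ∑ x, (if x ∈ C then 0 else p x) = M := by
      rw [hM]
      have hpt : ∀ x ∈ Finset.univ, (if x ∈ C then (0:ℝ) else p x) = if x ∉ C then p x else 0 := by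
        intro x _
        by_cases h : x ∈ C <;> simp [h]
      rw [Finset.sum_congr rfl hpt, ← Finset.sum_filter]
      apply Finset.sum_congr _ (fun _ _ => rfl)
      ext x
      rw [Finset.mem_filter, hS1]
      simp
    rw [e2, e3]
    linarith
end
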